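/- Let d ≥ 1, n ≥ 2, and let A : [n]^d → ℝ. Define A' : [n−1]^d → ℝ by A'[i] = Σ_{j ∈ B_d} (−1)^{‖j‖₁} · A[i + j]. Then the maximum over i ∈ [n−1]^d and integers Δ ≥ 0 with i_r + Δ ≤ n−1 for all r of the hypercube sum Σ_{k : i_r ≤ k_r ≤ i_r+Δ for all r} A'[k] equals the maximum over i ∈ [n−1]^d and integers Δ ≥ 1 with i_r + Δ ≤ n for all r of Σ_{j ∈ B_d} (−1)^{‖j‖₁} · A[i + Δ·j]. -/

import Mathlib

lemma coord_id (i Δ m : ℕ) :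
    ∑ x : Fin 2, (-1:ℝ)^(x:ℕ) * (if i + (x:ℕ) ≤ m ∧ m ≤ i + Δ + (x:ℕ) then 1 else 0)
    = ∑ x : Fin 2, (-1:ℝ)^(x:ℕ) * (if m = i + (Δ+1) * (x:ℕ) then 1 else 0) := by
  simp only [Fin.sum_univ_two, Fin.val_zero, Fin.val_one, pow_zero, pow_one]
  split_ifs <;> norm_num <;> omega

lemma key (d : ℕ) (A : (Fin d → ℕ) → ℝ) (i : Fin d → ℕ) (Δ : ℕ) :
    ∑ k ∈ Finset.Icc i (fun r => i r + Δ),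
      ∑ j : Fin d → Fin 2, (-1:ℝ)^(∑ r, (j r).val) * A (fun r => k r + (j r).val)
    = ∑ j : Fin d → Fin 2, (-1:ℝ)^(∑ r, (j r).val) * A (fun r => i r + (Δ+1) * (j r).val) := by
  classical
  set box := Finset.Icc i (fun r => i r + Δ + 1) with hbox
  -- step 1: swap k and j
  rw [Finset.sum_comm]
  -- step 2: per j, rewrite inner sum over k as sum over box with indicator
  have hA1 : ∀ j : Fin d → Fin 2,
      (∑ k ∈ Finset.Icc i (fun r => i r + Δ), A (fun r => k r + (j r).val))
      = ∑ m ∈ box, (∏ r, (if i r + (j r).val ≤ m r ∧ m r ≤ i r + Δ + (j r).val then (1:ℝ) else 0)) * A m := by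
    intro j
    have : ∀ m : Fin d → ℕ,
        (∏ r, (if i r + (j r).val ≤ m r ∧ m r ≤ i r + Δ + (j r).val then (1:ℝ) else 0))
        = if (∀ r, i r + (j r).val ≤ m r ∧ m r ≤ i r + Δ + (j r).val) then 1 else 0 := by
      intro m; rw [Finset.prod_boole]; simp
    simp only [this, ite_mul, one_mul, zero_mul]
    rw [Finset.sum_ite, Finset.sum_const_zero, add_zero]
    refine (Finset.sum_nbij' (fun k => fun r => k r + (j r).val) (fun m => fun r => m r - (j r).val)
      ?_ ?_ ?_ ?_ ?_)
    · intro k hk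
      simp only [Finset.mem_filter, hbox, Finset.mem_Icc, Pi.le_def] at *
      obtain ⟨h1, h2⟩ := hk
      have hj : ∀ r, (j r).val ≤ 1 := fun r => Fin.is_le (j r)
      exact ⟨⟨fun r => by have := h1 r; have := hj r; omega,
              fun r => by have := h2 r; have := hj r; omega⟩,
             fun r => ⟨by have := h1 r; omega, by have := h2 r; omega⟩⟩
    · intro m hm
      simp only [Finset.mem_filter, hbox, Finset.mem_Icc, Pi.le_def] at *
      obtain ⟨_, h3⟩ := hm
      exact ⟨fun r => by have := (h3 r).1; omega, fun r => by have := (h3 r).2; omega⟩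
    · intro k hk; funext r; show k r + (j r).val - (j r).val = k r; omega
    · intro m hm
      simp only [Finset.mem_filter] at hm
      funext r; show m r - (j r).val + (j r).val = m r
      have := (hm.2 r).1; omega
    · intro k hk; rfl
  simp only [← Finset.mul_sum, hA1]
  -- step 3: swap j and m
  simp only [Finset.mul_sum]
  rw [Finset.sum_comm]
  -- step 4: pointwise over m, swap sum-of-products
  have hB : ∀ m ∈ box,
      (∑ j : Fin d → Fin 2, (-1:ℝ)^(∑ r, (j r).val) *
        ((∏ r, (if i r + (j r).val ≤ m r ∧ m r ≤ i r + Δ + (j r).val then (1:ℝ) else 0)) * A m))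
      = ∑ j : Fin d → Fin 2, (-1:ℝ)^(∑ r, (j r).val) *
        ((∏ r, (if m r = i r + (Δ+1) * (j r).val then (1:ℝ) else 0)) * A m) := by
    intro m _
    have hrw : ∀ (g : Fin d → ℕ → Prop) [∀ r x, Decidable (g r x)],
        (∑ j : Fin d → Fin 2, (-1:ℝ)^(∑ r, (j r).val) *
          ((∏ r, (if g r (j r).val then (1:ℝ) else 0)) * A m))
        = (∏ r, ∑ x : Fin 2, (-1:ℝ)^(x:ℕ) * (if g r (x:ℕ) then 1 else 0)) * A m := by
      intro g _
      rw [Finset.prod_univ_sum, Fintype.piFinset_univ, Finset.sum_mul]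
      refine Finset.sum_congr rfl fun j _ => ?_
      rw [Finset.prod_mul_distrib, Finset.prod_pow_eq_pow_sum]
      ring
    rw [hrw (fun r x => i r + x ≤ m r ∧ m r ≤ i r + Δ + x),
        hrw (fun r x => m r = i r + (Δ+1) * x)]
    congr 1
    exact Finset.prod_congr rfl fun r _ => coord_id (i r) Δ (m r)
  rw [Finset.sum_congr rfl hB]
  rw [Finset.sum_comm]
  -- step 5: collapse indicator of equality
  refine Finset.sum_congr rfl fun j _ => ?_
  have : ∀ m : Fin d → ℕ,
      (∏ r, (if m r = i r + (Δ+1) * (j r).val then (1:ℝ) else 0))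
      = if m = (fun r => i r + (Δ+1) * (j r).val) then 1 else 0 := by
    intro m; rw [Finset.prod_boole]
    congr 1
    simp [funext_iff]
  simp only [this, ite_mul, one_mul, zero_mul, mul_ite, mul_zero]
  rw [Finset.sum_ite_eq' box (fun r => i r + (Δ+1) * (j r).val) (fun m => (-1:ℝ)^(∑ r, (j r).val) * A m)]
  have hmem : (fun r => i r + (Δ+1) * (j r).val) ∈ box := by
    simp only [hbox, Finset.mem_Icc, Pi.le_def]
    refine ⟨fun r => Nat.le_add_right _ _, fun r => ?_⟩
    have h := Nat.mul_le_mul_left (Δ+1) (Fin.is_le (j r))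
    omega
  rw [if_pos hmem]
theorem stmt_12 (d n : ℕ) (hd : 1 ≤ d) (hn : 2 ≤ n)
    (A A' : (Fin d → ℕ) → ℝ)
    (hA' : ∀ i : Fin d → ℕ, (∀ r, 1 ≤ i r ∧ i r ≤ n - 1) →
      A' i = ∑ j : Fin d → Fin 2, (-1 : ℝ) ^ (∑ r, (j r).val) *
        A (fun r => i r + (j r).val)) :
    sSup {x : ℝ | ∃ (i : Fin d → ℕ) (Δ : ℕ),
        (∀ r, 1 ≤ i r ∧ i r ≤ n - 1) ∧ (∀ r, i r + Δ ≤ n - 1) ∧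
        x = ∑ k ∈ Finset.Icc i (fun r => i r + Δ), A' k}
      = sSup {x : ℝ | ∃ (i : Fin d → ℕ) (Δ : ℕ),
          (∀ r, 1 ≤ i r ∧ i r ≤ n - 1) ∧ 1 ≤ Δ ∧ (∀ r, i r + Δ ≤ n) ∧
          x = ∑ j : Fin d → Fin 2, (-1 : ℝ) ^ (∑ r, (j r).val) *
                A (fun r => i r + Δ * (j r).val)} := by
  have hsum : ∀ (i : Fin d → ℕ) (Δ : ℕ), (∀ r, 1 ≤ i r ∧ i r ≤ n - 1) →
      (∀ r, i r + Δ ≤ n - 1) →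
      (∑ k ∈ Finset.Icc i (fun r => i r + Δ), A' k)
      = ∑ j : Fin d → Fin 2, (-1:ℝ)^(∑ r, (j r).val) *
          A (fun r => i r + (Δ+1) * (j r).val) := by
    intro i Δ h1 h2
    rw [← key d A i Δ]
    refine Finset.sum_congr rfl fun k hk => ?_
    rw [Finset.mem_Icc, Pi.le_def, Pi.le_def] at hk
    exact hA' k fun r => ⟨le_trans (h1 r).1 (hk.1 r), le_trans (hk.2 r) (h2 r)⟩
  congr 1
  ext x
  simp only [Set.mem_setOf_eq]
  constructor
  · rintro ⟨i, Δ, h1, h2, rfl⟩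
    exact ⟨i, Δ+1, h1, Nat.le_add_left _ _,
      fun r => by have := h2 r; omega, hsum i Δ h1 h2⟩
  · rintro ⟨i, Δ, h1, hΔ, h2, rfl⟩
    refine ⟨i, Δ-1, h1, fun r => by have := h2 r; omega, ?_⟩
    rw [hsum i (Δ-1) h1 (fun r => by have := h2 r; omega)]
    have : Δ - 1 + 1 = Δ := by omega
    rw [this]
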